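/- Let G be a finite abelian group with subgroups G_1, …, G_n and G_e such that ⋂_{i=1}^n G_i = {1} and |G| = ∏_{i=1}^n [G : G_i]. Then there exists a group homomorphism φ : ∏_{i=1}^n G⧸G_i → G⧸G_e such that φ(gG_1, …, gG_n) = gG_e for every g ∈ G. (Here each G⧸G_i and G⧸G_e carries the quotient group structure, which exists since G is abelian.) -/

import Mathlib

/-- For a finite abelian group `G` with subgroups `G_1, …, G_n, G_e` such that
`⋂ i, G_i = {1}` and `|G| = ∏ i, [G : G_i]`, there exists a group homomorphism
`φ : ∏ i, G ⧸ G_i →* G ⧸ G_e` with `φ (g G_1, …, g G_n) = g G_e` for all `g ∈ G`. -/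
theorem exists_hom_pi_quotient_to_quotient
    {n : ℕ} (G : Type*) [CommGroup G] [Fintype G] (Gs : Fin n → Subgroup G)
    (Ge : Subgroup G)
    (h₁ : (⨅ i, Gs i) = ⊥) (h₂ : Nat.card G = ∏ i, (Gs i).index) :
    ∃ φ : (∀ i, G ⧸ Gs i) →* G ⧸ Ge,
      ∀ g : G, φ (fun i => QuotientGroup.mk g) = QuotientGroup.mk g := by
  set ψ : G →* ∀ i, G ⧸ Gs i := Pi.monoidHom (fun i => QuotientGroup.mk' (Gs i))
  have hker : ψ.ker = ⊥ := by
    rw [← h₁]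
    ext x
    simp [ψ, MonoidHom.mem_ker, Subgroup.mem_iInf, funext_iff, QuotientGroup.eq_one_iff, Pi.monoidHom, MonoidHom.pi_apply]
  have hinj : Function.Injective ψ := (MonoidHom.ker_eq_bot_iff ψ).mp hker
  have hcard : Nat.card (∀ i, G ⧸ Gs i) = Nat.card G := by
    rw [h₂, Nat.card_pi]
    congr 1
  have hbij : Function.Bijective ψ := by
    have : Finite (∀ i, G ⧸ Gs i) := by
      have : ∀ i, Finite (G ⧸ Gs i) := fun i => Quotient.finite _
      infer_instance
    exact (Nat.bijective_iff_injective_and_card ψ).mpr ⟨hinj, hcard.symm⟩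
  set e := MulEquiv.ofBijective ψ hbij
  refine ⟨(QuotientGroup.mk' Ge).comp e.symm.toMonoidHom, fun g => ?_⟩
  have : e.symm (fun i => QuotientGroup.mk g) = g := by
    apply hinj
    show ψ (e.symm _) = _
    rw [show ψ (e.symm _) = e (e.symm _) from rfl, MulEquiv.apply_symm_apply]
    rfl
  simp only [MonoidHom.coe_comp, Function.comp_apply, MulEquiv.coe_toMonoidHom, this, QuotientGroup.mk'_apply]
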